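/- Let 𝓕 be a non-principal ultrafilter on ℕ and let 𝔪_𝓕 = {f ∈ ℓ^∞ : lim_𝓕 f(n) = 0}. Then 𝔪_𝓕 is a maximal ideal of ℓ^∞, and every h ∈ ℓ² can be written h = g·k with g ∈ 𝔪_𝓕 and k ∈ ℓ²; in particular 𝔪_𝓕 ℓ² = ℓ². -/

import Mathlib

open Filter Topology
open scoped ENNReal

set_option synthInstance.maxHeartbeats 1000000
set_option maxHeartbeats 1000000

noncomputable section

/-- `ℓ^∞`: the Banach algebra of bounded complex sequences, realised as a subalgebra of the
algebra of all complex sequences, with pointwise (termwise) operations. -/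
def linf : Subalgebra ℂ (ℕ → ℂ) where
  carrier := {f | Memℓp f ∞}
  mul_mem' {f g} hf hg := show Memℓp (f * g) ∞ from Memℓp.infty_mul hf hg
  one_mem' := show Memℓp (1 : ℕ → ℂ) ∞ from one_memℓp_infty
  add_mem' {f g} hf hg := show Memℓp (f + g) ∞ from Memℓp.add hf hg
  zero_mem' := show Memℓp (0 : ℕ → ℂ) ∞ from zero_memℓp
  algebraMap_mem' c := show Memℓp (algebraMap ℂ (ℕ → ℂ) c) ∞ from algebraMap_memℓp_infty c

lemma memℓp_two_infty_mul {f g : ℕ → ℂ} (hf : Memℓp f ∞) (hg : Memℓp g 2) :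
    Memℓp (f * g) 2 := by
  obtain ⟨C, hC⟩ := memℓp_infty_iff.1 hf
  have hC' : ∀ i, ‖f i‖ ≤ C := fun i => hC ⟨i, rfl⟩
  have hC0 : 0 ≤ C := (norm_nonneg (f 0)).trans (hC' 0)
  apply memℓp_gen
  have hgs : Summable fun i => ‖g i‖ ^ (2 : ℝ≥0∞).toReal := hg.summable (by norm_num)
  refine (hgs.mul_left (C ^ (2 : ℝ≥0∞).toReal)).of_nonneg_of_le
      (fun i => Real.rpow_nonneg (norm_nonneg _) _) (fun i => ?_)
  calc ‖(f * g) i‖ ^ (2 : ℝ≥0∞).toReal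
      ≤ (C * ‖g i‖) ^ (2 : ℝ≥0∞).toReal := by
        refine Real.rpow_le_rpow (norm_nonneg _) ?_ ENNReal.toReal_nonneg
        rw [Pi.mul_apply, norm_mul]
        exact mul_le_mul_of_nonneg_right (hC' i) (norm_nonneg _)
    _ = C ^ (2 : ℝ≥0∞).toReal * ‖g i‖ ^ (2 : ℝ≥0∞).toReal :=
        Real.mul_rpow hC0 (norm_nonneg _)

/-- `ℓ²`: the Hilbert space of square-summable complex sequences, as a module over `ℓ^∞`,
the action being termwise multiplication. -/
def l2 : Submodule linf (ℕ → ℂ) where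
  carrier := {f | Memℓp f 2}
  add_mem' {f g} hf hg := show Memℓp (f + g) 2 from Memℓp.add hf hg
  zero_mem' := show Memℓp (0 : ℕ → ℂ) 2 from zero_memℓp
  smul_mem' c f hf := by
    have hsmul : c • f = (c : ℕ → ℂ) * f := Algebra.smul_def c f
    rw [Set.mem_setOf_eq, hsmul]
    exact memℓp_two_infty_mul c.2 hf

instance : CommRing linf := inferInstance
instance : Module linf (ℕ → ℂ) := inferInstance
instance : AddCommGroup l2 := inferInstance
instance : Module linf l2 := inferInstance

lemma single_mem_l2 (n : ℕ) : Pi.single n (1 : ℂ) ∈ l2 := by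
  refine (memℓp_zero ?_).of_exponent_ge zero_le
  refine (Set.finite_singleton n).subset ?_
  intro j hj
  simp only [Set.mem_setOf_eq] at hj
  simp only [Set.mem_singleton_iff]
  by_contra h
  exact hj (Pi.single_eq_of_ne h 1)


lemma factor_l2 (h : ℕ → ℂ) (hh : Memℓp h 2) :
    ∃ g k : ℕ → ℂ, Memℓp g ∞ ∧ Memℓp k 2 ∧ (∀ n, g n * k n = h n) ∧
      Tendsto g atTop (𝓝 0) := by
  set a : ℕ → ℝ := fun n => ‖h n‖ ^ 2 with ha_def
  have ha : Summable a := by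
    have := hh.summable (by norm_num : 0 < (2 : ℝ≥0∞).toReal)
    refine this.congr fun n => ?_
    have h2 : ((2 : ℝ≥0∞)).toReal = ((2 : ℕ) : ℝ) := by norm_num
    rw [h2, Real.rpow_natCast]
  have ha0 : ∀ n, 0 ≤ a n := fun n => sq_nonneg _
  set r : ℕ → ℝ := fun n => ∑' k, a (k + n) with hr_def
  have hr0 : ∀ n, 0 ≤ r n := fun n => tsum_nonneg fun k => ha0 _
  have hshift : ∀ n, Summable fun k => a (k + n) := fun n =>
    (summable_nat_add_iff n).2 ha
  have hrec : ∀ n, r n = a n + r (n + 1) := by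
    intro n
    have := Summable.tsum_eq_zero_add (hshift n)
    simp only [zero_add] at this
    rw [hr_def]
    simp only []
    rw [this]
    congr 1
    exact tsum_congr fun k => by ring_nf
  have han : ∀ n, a n ≤ r n := fun n => by
    rw [hrec n]; linarith [hr0 (n + 1)]
  have hmono : ∀ n, r (n + 1) ≤ r n := fun n => by
    rw [hrec n]; linarith [ha0 n]
  have hrtend : Tendsto r atTop (𝓝 0) := tendsto_sum_nat_add a
  set s : ℕ → ℝ := fun n => Real.sqrt (r n) with hs_def
  set b : ℕ → ℝ := fun n => Real.sqrt (s n) with hb_def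
  have hs0 : ∀ n, 0 ≤ s n := fun n => Real.sqrt_nonneg _
  have hb0 : ∀ n, 0 ≤ b n := fun n => Real.sqrt_nonneg _
  have hsq_s : ∀ n, s n ^ 2 = r n := fun n => Real.sq_sqrt (hr0 n)
  have hsq_b : ∀ n, b n ^ 2 = s n := fun n => Real.sq_sqrt (hs0 n)
  have hsmono : ∀ n, s (n + 1) ≤ s n := fun n => Real.sqrt_le_sqrt (hmono n)
  refine ⟨fun n => (b n : ℂ), fun n => if r n = 0 then 0 else h n / (b n : ℂ),
    ?_, ?_, ?_, ?_⟩
  · -- Memℓp g ∞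
    have rant : ∀ n, r n ≤ r 0 := by
      intro n
      induction n with
      | zero => exact le_refl _
      | succ m ih => exact (hmono m).trans ih
    refine memℓp_infty ⟨Real.sqrt (Real.sqrt (r 0)), ?_⟩
    rintro x ⟨n, rfl⟩
    simp only [Complex.norm_real, Real.norm_eq_abs, abs_of_nonneg (hb0 n)]
    exact Real.sqrt_le_sqrt (Real.sqrt_le_sqrt (rant n))
  · -- Memℓp k 2
    apply memℓp_gen
    have key : ∀ n, ‖if r n = 0 then 0 else h n / (b n : ℂ)‖ ^ 2
        ≤ 2 * (s n - s (n + 1)) := by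
      intro n
      by_cases hrn : r n = 0
      · have hr1 : r (n + 1) = 0 := le_antisymm (hrn ▸ hmono n) (hr0 _)
        simp [hrn, hr1, hs_def]
      · have hspos : 0 < s n := Real.sqrt_pos.2 (lt_of_le_of_ne (hr0 n) (Ne.symm hrn))
        have hbpos : 0 < b n := Real.sqrt_pos.2 hspos
        rw [if_neg hrn]
        have hnorm : ‖h n / (b n : ℂ)‖ ^ 2 = a n / s n := by
          rw [norm_div, div_pow, Complex.norm_real, Real.norm_eq_abs,
            abs_of_nonneg (hb0 n), hsq_b, ha_def]
        rw [hnorm, div_le_iff₀ hspos]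
        have hane : a n = (s n - s (n + 1)) * (s n + s (n + 1)) := by
          have := hrec n
          nlinarith [hsq_s n, hsq_s (n + 1)]
        rw [hane]
        have h1 : s n + s (n + 1) ≤ 2 * s n := by linarith [hsmono n]
        have h2 : 0 ≤ s n - s (n + 1) := by linarith [hsmono n]
        nlinarith
    have htel : Summable fun n => s n - s (n + 1) := by
      apply summable_of_sum_range_le (c := s 0) (fun n => by linarith [hsmono n])
      intro n
      rw [Finset.sum_range_sub' s n]
      linarith [hs0 n]
    have hsum2 : Summable fun n =>
        ‖if r n = 0 then 0 else h n / (b n : ℂ)‖ ^ 2 :=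
      (htel.mul_left 2).of_nonneg_of_le (fun n => sq_nonneg _) key
    refine hsum2.congr fun n => ?_
    have h2 : ((2 : ℝ≥0∞)).toReal = ((2 : ℕ) : ℝ) := by norm_num
    rw [h2, Real.rpow_natCast]
  · -- product
    intro n
    by_cases hrn : r n = 0
    · have : a n = 0 := le_antisymm (hrn ▸ han n) (ha0 n)
      have hn0 : h n = 0 := by
        have := pow_eq_zero_iff (n := 2) (by norm_num) |>.1 this
        exact norm_eq_zero.1 this
      simp [hrn, hn0]
    · have hspos : 0 < s n := Real.sqrt_pos.2 (lt_of_le_of_ne (hr0 n) (Ne.symm hrn))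
      have hbpos : 0 < b n := Real.sqrt_pos.2 hspos
      simp only [if_neg hrn]
      have hbne : (b n : ℂ) ≠ 0 := Complex.ofReal_ne_zero.2 (ne_of_gt hbpos)
      rw [mul_div_assoc', mul_comm, mul_div_assoc, div_self hbne, mul_one]
  · -- tendsto 0
    have : Tendsto b atTop (𝓝 0) := by
      have h1 : Tendsto s atTop (𝓝 0) := by
        have := (Real.continuous_sqrt.tendsto 0).comp hrtend
        rw [Real.sqrt_zero] at this; exact this
      have := (Real.continuous_sqrt.tendsto 0).comp h1
      rw [Real.sqrt_zero] at this; exact this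
    have := (Complex.continuous_ofReal.tendsto 0).comp this
    rw [Complex.ofReal_zero] at this; exact this

lemma linf_exists_lim (𝓕 : Ultrafilter ℕ) (f : ℕ → ℂ) (hf : Memℓp f ∞) :
    ∃ L, Filter.Tendsto f ↑𝓕 (𝓝 L) := by
  obtain ⟨C, hC⟩ := memℓp_infty_iff.1 hf
  have hC' : ∀ i, f i ∈ Metric.closedBall (0:ℂ) C := by
    intro i; simpa [Metric.mem_closedBall, dist_eq_norm] using hC ⟨i, rfl⟩
  obtain ⟨x, -, hx⟩ := (isCompact_closedBall (0:ℂ) C).ultrafilter_le_nhds (𝓕.map f)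
    (by rw [Ultrafilter.coe_map, Filter.le_principal_iff, Filter.mem_map]
        exact Filter.univ_mem' hC')
  exact ⟨x, hx⟩

/-- Let `𝓕` be a non-principal ultrafilter on `ℕ` and let
`𝔪_𝓕 = {f ∈ ℓ^∞ : lim_𝓕 f(n) = 0}`. Then `𝔪_𝓕` is a maximal ideal of `ℓ^∞`, every
`h ∈ ℓ²` can be written `h = g·k` with `g ∈ 𝔪_𝓕` and `k ∈ ℓ²`, and in particular
`𝔪_𝓕 ℓ² = ℓ²`. -/
theorem ultrafilter_maximal_ideal_smul_l2_eq_top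
    (𝓕 : Ultrafilter ℕ) (h𝓕 : ∀ m : ℕ, (𝓕 : Filter ℕ) ≠ pure m) :
    ∃ 𝔪 : Ideal linf,
      (∀ f : linf, f ∈ 𝔪 ↔ Tendsto (fun n => (f : ℕ → ℂ) n) ↑𝓕 (𝓝 0)) ∧
      𝔪.IsMaximal ∧
      (∀ h : l2, ∃ (g : linf) (k : l2), g ∈ 𝔪 ∧ h = g • k) ∧
      𝔪 • (⊤ : Submodule linf l2) = ⊤ := by
  have h𝓕le : (𝓕 : Filter ℕ) ≤ atTop := by
    rcases 𝓕.le_cofinite_or_eq_pure with hle | ⟨m, hm⟩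
    · rwa [Nat.cofinite_eq_atTop] at hle
    · exact absurd (congrArg Ultrafilter.toFilter hm) (h𝓕 m)
  set 𝔪 : Ideal linf :=
    { carrier := {f : linf | Tendsto (fun n => (f : ℕ → ℂ) n) ↑𝓕 (𝓝 0)}
      add_mem' := fun {x y} hx hy => by
        have := hx.add hy
        simpa using this
      zero_mem' := by simpa using (tendsto_const_nhds : Tendsto (fun _ : ℕ => (0:ℂ)) ↑𝓕 (𝓝 0))
      smul_mem' := fun c x hx => by
        obtain ⟨C, hC⟩ := memℓp_infty_iff.1 c.2
        have hC' : ∀ i, ‖(c : ℕ → ℂ) i‖ ≤ C := fun i => hC ⟨i, rfl⟩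
        have key : Tendsto (fun n => (c : ℕ → ℂ) n * (x : ℕ → ℂ) n) ↑𝓕 (𝓝 0) := by
          refine squeeze_zero_norm (fun n => ?_) (by simpa using (hx.norm).const_mul C)
          rw [norm_mul]
          exact mul_le_mul_of_nonneg_right (hC' n) (norm_nonneg _)
        simpa [Algebra.smul_def] using key } with h𝔪
  have hmem : ∀ f : linf, f ∈ 𝔪 ↔ Tendsto (fun n => (f : ℕ → ℂ) n) ↑𝓕 (𝓝 0) :=
    fun f => Iff.rfl
  have hfact : ∀ h : l2, ∃ (g : linf) (k : l2), g ∈ 𝔪 ∧ h = g • k := by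
    intro h
    obtain ⟨g, k, hginf, hk2, hgk, hgt⟩ := factor_l2 (h : ℕ → ℂ) h.2
    refine ⟨⟨g, hginf⟩, ⟨k, hk2⟩, (hmem _).2 (hgt.mono_left h𝓕le), ?_⟩
    apply Subtype.ext
    have hcoe : (((⟨g, hginf⟩ : linf) • (⟨k, hk2⟩ : l2) : l2) : ℕ → ℂ) = g * k := by
      rw [SetLike.val_smul, Algebra.smul_def]
      rfl
    rw [hcoe]
    funext n
    exact (hgk n).symm
  refine ⟨𝔪, hmem, ?_, hfact, ?_⟩
  · -- maximality
    rw [Ideal.isMaximal_iff]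
    constructor
    · intro h1
      have h1' : Tendsto (fun _ : ℕ => (1 : ℂ)) ↑𝓕 (𝓝 0) := by
        simpa using (hmem 1).1 h1
      exact one_ne_zero (tendsto_nhds_unique tendsto_const_nhds h1')
    · intro J x hle hx hxJ
      obtain ⟨L, hL⟩ := linf_exists_lim 𝓕 (x : ℕ → ℂ) x.2
      have hL0 : L ≠ 0 := by
        rintro rfl
        exact hx ((hmem x).2 hL)
      set c : linf := algebraMap ℂ linf L with hc
      have hcoe : ∀ n, (c : ℕ → ℂ) n = L := fun n => rfl
      have hsub : x - c ∈ 𝔪 := by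
        refine (hmem _).2 ?_
        have hc2 : Tendsto (fun n => (x : ℕ → ℂ) n - L) ↑𝓕 (𝓝 (L - L)) :=
          hL.sub tendsto_const_nhds
        simpa [sub_self, hcoe] using hc2
      have hcJ : c ∈ J := by
        have hxc : c = x - (x - c) := by ring
        rw [hxc]
        exact J.sub_mem hxJ (hle hsub)
      have hone : (algebraMap ℂ linf L⁻¹) * c = 1 := by
        rw [hc, ← map_mul, inv_mul_cancel₀ hL0, map_one]
      exact hone ▸ J.mul_mem_left _ hcJ
  · -- smul top
    rw [eq_top_iff]
    rintro x -
    obtain ⟨g, k, hg, rfl⟩ := hfact x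
    exact Submodule.smul_mem_smul hg Submodule.mem_top
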